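/- arXiv:physics/0601005 — 4 statements merged into one kernel-verified Lean document; each statement's English description precedes it below -/
import Mathlib

section
/- For every β > 0, ν < 0 and N ∈ ℕ, Z(β,N) = (exp(−ν·N)/(2π)) · ∫_{−π}^{π} exp(−i·N·α) · ∏_{i} (1 − exp(ν + i·α − β·λ i))⁻¹ dα, where the integrand is complex-valued and the product converges since Re(ν + iα − β·λ i) = ν − β·λ i < 0. -/
open Finset

set_option maxHeartbeats 1000000

noncomputable section

/-- The finite set of configurations: functions `M : Fin n → ℕ` with `∑ i, M i = N`. -/
def Omega (n N : ℕ) : Finset (Fin n → ℕ) := Finset.Nat.antidiagonalTuple n N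

/-- The energy `∑ i, (M i) · λ i` of a configuration. -/
def energy {n : ℕ} (lam : Fin n → ℝ) (M : Fin n → ℕ) : ℝ := ∑ i, (M i : ℝ) * lam i

/-- The partition function `Z(β, N) = ∑_{M ∈ Ω(N)} exp(−β ∑ i, (M i)·λ i)`. -/
def Zpart (n N : ℕ) (lam : Fin n → ℝ) (β : ℝ) : ℝ :=
  ∑ M ∈ Omega n N, Real.exp (-β * energy lam M)

lemma geom_prod_pi {n : ℕ} (c : Fin n → ℂ) (h : ∀ i, ‖c i‖ < 1) :
    Summable (fun M : Fin n → ℕ => ‖∏ i, c i ^ M i‖) ∧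
    ∑' M : Fin n → ℕ, ∏ i, c i ^ M i = ∏ i, (1 - c i)⁻¹ := by
  induction n with
  | zero =>
    haveI : Subsingleton (Fin 0 → ℕ) := ⟨fun f g => funext fun i => i.elim0⟩
    haveI : Finite (Fin 0 → ℕ) := Finite.of_subsingleton
    refine ⟨Summable.of_finite, ?_⟩
    rw [tsum_eq_single (fun i => i.elim0) (fun b hb => absurd (Subsingleton.elim b _) hb)]
    simp
  | succ n ih =>
    obtain ⟨ih1, ih2⟩ := ih (fun i => c i.succ) (fun i => h i.succ)
    have h0 := h 0
    have hg : Summable (fun k : ℕ => ‖c 0 ^ k‖) := by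
      simpa [norm_pow] using summable_geometric_of_lt_one (norm_nonneg (c 0)) h0
    set e : ℕ × (Fin n → ℕ) ≃ (Fin (n+1) → ℕ) := Fin.consEquiv (fun _ => ℕ)
    have hcomp : ∀ p : ℕ × (Fin n → ℕ),
        (∏ i, c i ^ (e p) i) = c 0 ^ p.1 * ∏ i : Fin n, c i.succ ^ p.2 i := by
      intro p
      rw [Fin.prod_univ_succ]
      simp [e, Fin.consEquiv]
    have hsum2 : Summable (fun p : ℕ × (Fin n → ℕ) => ‖c 0 ^ p.1 * ∏ i : Fin n, c i.succ ^ p.2 i‖) :=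
      Summable.mul_norm (f := fun k : ℕ => c 0 ^ k)
        (g := fun M : Fin n → ℕ => ∏ i : Fin n, c i.succ ^ M i) hg ih1
    constructor
    · rw [← e.summable_iff]
      have heq : ((fun M : Fin (n+1) → ℕ => ‖∏ i, c i ^ M i‖) ∘ e)
          = fun p : ℕ × (Fin n → ℕ) => ‖c 0 ^ p.1 * ∏ i : Fin n, c i.succ ^ p.2 i‖ :=
        funext fun p => by rw [Function.comp_apply, hcomp]
      rw [heq]; exact hsum2
    · rw [← e.tsum_eq]
      calc ∑' p : ℕ × (Fin n → ℕ), ∏ i, c i ^ (e p) i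
          = ∑' p : ℕ × (Fin n → ℕ), c 0 ^ p.1 * ∏ i : Fin n, c i.succ ^ p.2 i := by
            exact tsum_congr hcomp
        _ = (∑' k : ℕ, c 0 ^ k) * ∑' M : Fin n → ℕ, ∏ i : Fin n, c i.succ ^ M i :=
            (tsum_mul_tsum_of_summable_norm (f := fun k : ℕ => c 0 ^ k)
              (g := fun M : Fin n → ℕ => ∏ i : Fin n, c i.succ ^ M i) hg ih1).symm
        _ = ∏ i, (1 - c i)⁻¹ := by
            rw [tsum_geometric_of_norm_lt_one h0, ih2, Fin.prod_univ_succ]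

lemma kernel_integral (k : ℤ) :
    (∫ α in (-Real.pi)..Real.pi, Complex.exp (Complex.I * (k : ℂ) * α)) =
      if k = 0 then ((2 * Real.pi : ℝ) : ℂ) else 0 := by
  rcases eq_or_ne k 0 with hk | hk
  · simp only [hk, Int.cast_zero, mul_zero, zero_mul, Complex.exp_zero, if_pos,
      intervalIntegral.integral_const]
    rw [Complex.real_smul]; push_cast; ring
  · have hc : Complex.I * (k : ℂ) ≠ 0 :=
      mul_ne_zero Complex.I_ne_zero (Int.cast_ne_zero.mpr hk)
    have := integral_exp_mul_complex (a := -Real.pi) (b := Real.pi) hc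
    simp only [if_neg hk]
    rw [show (fun α : ℝ => Complex.exp (Complex.I * (k : ℂ) * α)) =
        (fun α : ℝ => Complex.exp ((Complex.I * (k : ℂ)) * α)) from rfl, this]
    have hexp : Complex.exp (Complex.I * (k : ℂ) * (Real.pi : ℂ)) =
        Complex.exp (Complex.I * (k : ℂ) * ((-Real.pi : ℝ) : ℂ)) := by
      have h1 : Complex.I * (k : ℂ) * (Real.pi : ℂ) =
          Complex.I * (k : ℂ) * ((-Real.pi : ℝ) : ℂ) + (k : ℂ) * (2 * (Real.pi : ℂ) * Complex.I) := by
        push_cast; ring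
      rw [h1, Complex.exp_add, Complex.exp_int_mul_two_pi_mul_I, mul_one]
    rw [hexp, sub_self, zero_div]


/-- Fourier coefficient extraction formula (11):
`Z(β,N) = (e^{−νN}/2π) ∫_{−π}^{π} e^{−iNα} ∏_i (1 − e^{ν + iα − βλ_i})⁻¹ dα`. -/
theorem Z_eq_fourier_integral (n : ℕ) (lam : Fin n → ℝ) (hlam : ∀ i, 0 ≤ lam i)
    (β ν : ℝ) (hβ : 0 < β) (hν : ν < 0) (N : ℕ) :
    (Zpart n N lam β : ℂ) =
      ((Real.exp (-ν * N) / (2 * Real.pi) : ℝ) : ℂ) *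
        ∫ α in (-Real.pi)..Real.pi,
          Complex.exp (-Complex.I * (N : ℂ) * (α : ℂ)) *
            ∏ i, (1 - Complex.exp ((ν : ℂ) + Complex.I * (α : ℂ) - (β : ℂ) * (lam i : ℂ)))⁻¹ := by
  classical
  set c : ℝ → Fin n → ℂ :=
    fun α i => Complex.exp ((ν : ℂ) + Complex.I * (α : ℂ) - (β : ℂ) * (lam i : ℂ)) with hc
  set r : Fin n → ℝ := fun i => Real.exp (ν - β * lam i) with hr
  have hnorm : ∀ (α : ℝ) (i : Fin n), ‖c α i‖ = r i := by
    intro α i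
    rw [hc, Complex.norm_exp]
    congr 1
    simp [Complex.add_re, Complex.sub_re, Complex.mul_re]
  have hrlt : ∀ i, r i < 1 := by
    intro i
    rw [hr]
    exact Real.exp_lt_one_iff.mpr (by nlinarith [hlam i])
  have hclt : ∀ (α : ℝ) (i : Fin n), ‖c α i‖ < 1 := fun α i => (hnorm α i) ▸ hrlt i
  set w : (Fin n → ℕ) → ℝ := fun M => ∏ i, r i ^ M i with hwdef
  have hw_nonneg : ∀ M, 0 ≤ w M := fun M =>
    Finset.prod_nonneg fun i _ => pow_nonneg (Real.exp_nonneg _) _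
  have hw_sum : Summable w := by
    have := (geom_prod_pi (c 0) (hclt 0)).1
    refine this.congr fun M => ?_
    rw [norm_prod]
    exact Finset.prod_congr rfl fun i _ => by rw [norm_pow, hnorm]
  set S : (Fin n → ℕ) → ℕ := fun M => ∑ i, M i with hS
  set term : (Fin n → ℕ) → ℝ → ℂ :=
    fun M α => Complex.exp (Complex.I * (((S M : ℤ) - (N : ℤ) : ℤ) : ℂ) * α) * (w M : ℂ)
    with hterm
  -- w M as a complex exponential
  have hwC : ∀ M, (w M : ℂ) = Complex.exp ((∑ i, (M i : ℂ) * ((ν : ℂ) - (β : ℂ) * (lam i : ℂ)))) := by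
    intro M
    rw [hwdef, Complex.exp_sum]
    push_cast [hr]
    refine Finset.prod_congr rfl fun i _ => ?_
    exact (Complex.exp_nat_mul _ _).symm
  -- pointwise expansion
  have hpoint : ∀ α : ℝ,
      Complex.exp (-Complex.I * (N : ℂ) * (α : ℂ)) * ∏ i, (1 - c α i)⁻¹
        = ∑' M : Fin n → ℕ, term M α := by
    intro α
    rw [← (geom_prod_pi (c α) (hclt α)).2, ← tsum_mul_left]
    refine tsum_congr fun M => ?_
    have hprod : ∏ i, c α i ^ M i
        = Complex.exp (∑ i, (M i : ℂ) * ((ν : ℂ) + Complex.I * (α : ℂ) - (β : ℂ) * (lam i : ℂ))) := by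
      rw [Complex.exp_sum]
      exact Finset.prod_congr rfl fun i _ => by
        rw [hc, ← Complex.exp_nat_mul]
    rw [hprod]
    simp only [hterm]
    rw [hwC, ← Complex.exp_add, ← Complex.exp_add]
    congr 1
    have hsplit : ∑ i, (M i : ℂ) * ((ν : ℂ) + Complex.I * (α : ℂ) - (β : ℂ) * (lam i : ℂ))
        = (∑ i, (M i : ℂ) * ((ν : ℂ) - (β : ℂ) * (lam i : ℂ))) + (S M : ℂ) * (Complex.I * α) := by
      rw [hS]
      push_cast
      rw [Finset.sum_mul, ← Finset.sum_add_distrib]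
      exact Finset.sum_congr rfl fun i _ => by ring
    rw [hsplit]
    push_cast
    ring
  -- integral of each term
  have hterm_int : ∀ M, (∫ α in (-Real.pi)..Real.pi, term M α)
      = (if S M = N then ((2 * Real.pi : ℝ) : ℂ) else 0) * (w M : ℂ) := by
    intro M
    rw [hterm]
    rw [intervalIntegral.integral_mul_const, kernel_integral ((S M : ℤ) - (N : ℤ))]
    congr 2
    simp [sub_eq_zero, Int.natCast_inj]
  -- swap integral and sum
  have hswap : (∫ α in (-Real.pi)..Real.pi, ∑' M : Fin n → ℕ, term M α)
      = ∑' M : Fin n → ℕ, ∫ α in (-Real.pi)..Real.pi, term M α := by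
    have hle : (-Real.pi) ≤ Real.pi := by linarith [Real.pi_pos]
    have hnn : ∀ M α, ‖term M α‖₊ = ‖w M‖₊ := by
      intro M α
      rw [hterm]
      simp only [nnnorm_mul]
      have h1 : ‖Complex.exp (Complex.I * (((S M : ℤ) - (N : ℤ) : ℤ) : ℂ) * α)‖₊ = 1 := by
        have : ‖Complex.exp (Complex.I * (((S M : ℤ) - (N : ℤ) : ℤ) : ℂ) * α)‖ = 1 := by
          rw [Complex.norm_exp]
          have : (Complex.I * (((S M : ℤ) - (N : ℤ) : ℤ) : ℂ) * α).re = 0 := by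
            simp [Complex.mul_re, Complex.mul_im]
          rw [this, Real.exp_zero]
        ext
        rw [coe_nnnorm, this, NNReal.coe_one]
      rw [h1, one_mul, Complex.nnnorm_real]
    simp only [intervalIntegral.integral_of_le hle]
    rw [MeasureTheory.integral_tsum]
    · intro M
      apply Continuous.aestronglyMeasurable
      rw [hterm]
      exact (Complex.continuous_exp.comp (by continuity)).mul continuous_const
    · have hcalc : ∀ M : Fin n → ℕ,
          (∫⁻ α in Set.Ioc (-Real.pi) Real.pi, ‖term M α‖₊)
            = (‖w M‖₊ : ENNReal) * ENNReal.ofReal (2 * Real.pi) := by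
        intro M
        have : (fun α => (‖term M α‖₊ : ENNReal)) = fun _ => (‖w M‖₊ : ENNReal) := by
          funext α; rw [hnn]
        rw [this, MeasureTheory.setLIntegral_const, Real.volume_Ioc]
        congr 1
        ring_nf
      simp only [enorm_eq_nnnorm, hcalc]
      rw [ENNReal.tsum_mul_right]
      refine ENNReal.mul_ne_top ?_ ENNReal.ofReal_ne_top
      rw [ENNReal.tsum_coe_ne_top_iff_summable]
      rw [← NNReal.summable_coe]
      refine hw_sum.congr fun M => ?_
      rw [coe_nnnorm, Real.norm_eq_abs, abs_of_nonneg (hw_nonneg M)]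
  -- assemble
  have hint : (∫ α in (-Real.pi)..Real.pi,
        Complex.exp (-Complex.I * (N : ℂ) * (α : ℂ)) *
          ∏ i, (1 - Complex.exp ((ν : ℂ) + Complex.I * (α : ℂ) - (β : ℂ) * (lam i : ℂ)))⁻¹)
      = ∫ α in (-Real.pi)..Real.pi, ∑' M : Fin n → ℕ, term M α := by
    refine intervalIntegral.integral_congr fun α _ => ?_
    exact hpoint α
  rw [hint, hswap]
  have hsum_eq : (∑' M : Fin n → ℕ, ∫ α in (-Real.pi)..Real.pi, term M α)
      = ∑ M ∈ Omega n N, ((2 * Real.pi : ℝ) : ℂ) * (w M : ℂ) := by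
    rw [tsum_congr hterm_int]
    rw [tsum_eq_sum (s := Omega n N) (f := fun M =>
        (if S M = N then ((2 * Real.pi : ℝ) : ℂ) else 0) * (w M : ℂ)) ?_]
    · refine Finset.sum_congr rfl fun M hM => ?_
      have hSM : S M = N := by
        rw [hS]; exact Finset.Nat.mem_antidiagonalTuple.1 hM
      simp only [if_pos hSM]
    · intro M hM
      have hne : S M ≠ N := by
        intro h
        rw [hS] at h
        exact hM (Finset.Nat.mem_antidiagonalTuple.2 h)
      simp only [if_neg hne, zero_mul]
  rw [hsum_eq, Finset.mul_sum, Zpart, Complex.ofReal_sum]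
  refine Finset.sum_congr rfl fun M hM => ?_
  have hSM : S M = N := by
    rw [hS]; exact Finset.Nat.mem_antidiagonalTuple.1 hM
  have hwR : w M = Real.exp (ν * N - β * energy lam M) := by
    simp only [hwdef]
    have : ∀ i ∈ Finset.univ, r i ^ M i = Real.exp ((M i : ℝ) * (ν - β * lam i)) := by
      intro i _
      rw [hr, Real.exp_nat_mul]
    rw [Finset.prod_congr rfl this, ← Real.exp_sum]
    congr 1
    have hE : energy lam M = ∑ i, (M i : ℝ) * lam i := rfl
    have hN : ((N : ℝ)) = ∑ i, (M i : ℝ) := by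
      rw [← hSM, hS]; push_cast; rfl
    rw [hE, hN, Finset.mul_sum, Finset.mul_sum, ← Finset.sum_sub_distrib]
    exact Finset.sum_congr rfl fun i _ => by ring
  have h2pi : (2 * Real.pi) ≠ 0 := by positivity
  have hreal : Real.exp (-β * energy lam M)
      = Real.exp (-ν * N) / (2 * Real.pi) * (2 * Real.pi * w M) := by
    have key : Real.exp (-ν * N) * Real.exp (ν * N - β * energy lam M)
        = Real.exp (-β * energy lam M) := by
      rw [← Real.exp_add]; congr 1; ring
    rw [hwR, ← key]
    field_simp
  rw [hreal]
  push_cast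
  ring
end
end

section
/- Let 0 = n₀ < n₁ < ⋯ < n_k = n be a block decomposition, let t : Fin k → ℝ be arbitrary real numbers, let E ≥ 0, Δ ≥ 0, β > 0, ν < 0 and c > 0 with ν + c < 0. Then the number of configurations M with ∑ i, (M i)·λ i ≤ E and ∑_{l=1}^{k} |S_l(M) − t l| ≥ Δ is at most exp(β·E − ν·N − c·Δ) · ∏_{l=1}^{k} ( ζ_l(ν+c,β)·exp(−c· t l) + ζ_l(ν−c,β)·exp(c · t l) ). -/
open Finset

noncomputable section

/-- Block `l` of the decomposition `0 = n₀ < n₁ < ⋯ < n_k = n`: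
the indices `i` with `n_{l} ≤ i < n_{l+1}` (blocks indexed by `l : Fin k`). -/
def block (n k : ℕ) (nb : Fin (k + 1) → ℕ) (l : Fin k) : Finset (Fin n) :=
  Finset.univ.filter fun i => nb l.castSucc ≤ (i : ℕ) ∧ (i : ℕ) < nb l.succ

/-- `S_l(M)`: the number of elements of the configuration falling into block `l`. -/
def blockSum {n k : ℕ} (nb : Fin (k + 1) → ℕ) (M : Fin n → ℕ) (l : Fin k) : ℕ :=
  ∑ i ∈ block n k nb l, M i

/-- `ζ_l(μ, β) = ∏_{i ∈ block l} (1 − exp(μ − β λ i))⁻¹`. -/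
def zetaBlock {n k : ℕ} (lam : Fin n → ℝ) (nb : Fin (k + 1) → ℕ) (l : Fin k) (μ β : ℝ) : ℝ :=
  ∏ i ∈ block n k nb l, (1 - Real.exp (μ - β * lam i))⁻¹

namespace DeviationAux

variable {n k : ℕ} {nb : Fin (k + 1) → ℕ}

lemma mem_block {l : Fin k} {i : Fin n} :
    i ∈ block n k nb l ↔ nb l.castSucc ≤ (i : ℕ) ∧ (i : ℕ) < nb l.succ := by
  simp [block]

lemma block_cover (hmono : StrictMono nb) (h0 : nb 0 = 0) (hlast : nb (Fin.last k) = n)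
    (i : Fin n) : ∃ l : Fin k, i ∈ block n k nb l := by
  classical
  set s := (univ : Finset (Fin (k + 1))).filter fun l => nb l ≤ (i : ℕ) with hs
  have hne : s.Nonempty := ⟨0, by simp [hs, h0]⟩
  set l0 := s.max' hne with hl0def
  have hl0 : nb l0 ≤ (i : ℕ) := (mem_filter.mp (s.max'_mem hne)).2
  have hne' : l0 ≠ Fin.last k := by
    intro h
    rw [h, hlast] at hl0
    exact absurd i.isLt (not_lt.mpr hl0)
  refine ⟨l0.castPred hne', ?_⟩
  rw [mem_block]
  refine ⟨by rw [Fin.castSucc_castPred]; exact hl0, ?_⟩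
  by_contra h
  push_neg at h
  have hmem : (l0.castPred hne').succ ∈ s := by simp [hs, h]
  have hle := s.le_max' _ hmem
  rw [← hl0def] at hle
  have h2 : l0 < (l0.castPred hne').succ := by
    conv_lhs => rw [← Fin.castSucc_castPred l0 hne']
    exact Fin.castSucc_lt_succ
  exact absurd hle (not_le.mpr h2)

lemma block_disj_lt (hmono : StrictMono nb) {l l' : Fin k} (h : l < l') :
    Disjoint (block n k nb l) (block n k nb l') := by
  rw [Finset.disjoint_left]
  intro i hi hi'
  rw [mem_block] at hi hi'
  have hle : nb l.succ ≤ nb l'.castSucc := by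
    apply hmono.monotone
    rw [Fin.le_def]
    simp only [Fin.val_succ, Fin.coe_castSucc]
    exact h
  omega

lemma block_disj (hmono : StrictMono nb) :
    (((univ : Finset (Fin k))) : Set (Fin k)).PairwiseDisjoint (block n k nb) := by
  intro l _ l' _ h
  rcases h.lt_or_gt with h | h
  · exact block_disj_lt hmono h
  · exact (block_disj_lt hmono h).symm

lemma univ_eq_biUnion (hmono : StrictMono nb) (h0 : nb 0 = 0) (hlast : nb (Fin.last k) = n) :
    (univ : Finset (Fin n)) = (univ : Finset (Fin k)).biUnion (block n k nb) := by
  ext i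
  simp only [mem_univ, true_iff, mem_biUnion]
  obtain ⟨l, hl⟩ := block_cover hmono h0 hlast i
  exact ⟨l, trivial, hl⟩

lemma prod_block {G : Type*} [CommMonoid G] (hmono : StrictMono nb) (h0 : nb 0 = 0)
    (hlast : nb (Fin.last k) = n) (f : Fin n → G) :
    ∏ l, ∏ i ∈ block n k nb l, f i = ∏ i, f i := by
  conv_rhs => rw [univ_eq_biUnion hmono h0 hlast]
  rw [Finset.prod_biUnion (block_disj hmono)]

lemma sum_block {G : Type*} [AddCommMonoid G] (hmono : StrictMono nb) (h0 : nb 0 = 0)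
    (hlast : nb (Fin.last k) = n) (f : Fin n → G) :
    ∑ l, ∑ i ∈ block n k nb l, f i = ∑ i, f i := by
  conv_rhs => rw [univ_eq_biUnion hmono h0 hlast]
  rw [Finset.sum_biUnion (block_disj hmono)]

lemma geom_bound {r : ℝ} (h0 : 0 ≤ r) (h1 : r < 1) (K : ℕ) :
    ∑ m ∈ Finset.range K, r ^ m ≤ (1 - r)⁻¹ := by
  calc ∑ m ∈ range K, r ^ m ≤ ∑' m : ℕ, r ^ m :=
        Summable.sum_le_tsum _ (fun i _ => pow_nonneg h0 i) (summable_geometric_of_lt_one h0 h1)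
    _ = (1 - r)⁻¹ := tsum_geometric_of_lt_one h0 h1

set_option maxHeartbeats 1000000 in
lemma sum_bound (N : ℕ) (lam : Fin n → ℝ) (hlam : ∀ i, 0 ≤ lam i)
    (hmono : StrictMono nb) (h0 : nb 0 = 0) (hlast : nb (Fin.last k) = n)
    (β : ℝ) (hβ : 0 < β) (μ : Fin k → ℝ) (hμ : ∀ l, μ l < 0) :
    ∑ M ∈ Omega n N, ∏ l, ∏ i ∈ block n k nb l, Real.exp ((μ l - β * lam i) * M i)
      ≤ ∏ l, zetaBlock lam nb l (μ l) β := by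
  classical
  set g : Fin n → ℝ := fun i => ∑ l, if i ∈ block n k nb l then μ l else 0 with hg
  have hgi : ∀ l : Fin k, ∀ i ∈ block n k nb l, g i = μ l := by
    intro l i hi
    rw [hg]
    dsimp only
    rw [Finset.sum_eq_single l (fun l' _ hne => by
      rw [if_neg]
      intro hi'
      exact Finset.disjoint_left.mp
        (block_disj hmono (by simp) (by simp) hne) hi' hi)
      (fun habs => absurd (mem_univ l) habs)]
    rw [if_pos hi]
  have hsub : Omega n N ⊆ Fintype.piFinset (fun _ : Fin n => Finset.range (N + 1)) := by
    intro M hM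
    rw [Fintype.mem_piFinset]
    intro a
    rw [Finset.mem_range]
    have hsum : ∑ i, M i = N := Finset.Nat.mem_antidiagonalTuple.mp hM
    have h2 : M a ≤ ∑ i, M i := Finset.single_le_sum (fun i _ => Nat.zero_le _) (mem_univ a)
    omega
  calc ∑ M ∈ Omega n N, ∏ l, ∏ i ∈ block n k nb l, Real.exp ((μ l - β * lam i) * M i)
      = ∑ M ∈ Omega n N, ∏ i, Real.exp ((g i - β * lam i) * M i) := by
        refine Finset.sum_congr rfl fun M _ => ?_
        rw [← prod_block hmono h0 hlast]
        exact Finset.prod_congr rfl fun l _ =>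
          Finset.prod_congr rfl fun i hi => by rw [hgi l i hi]
    _ ≤ ∑ M ∈ Fintype.piFinset (fun _ : Fin n => Finset.range (N + 1)),
          ∏ i, Real.exp ((g i - β * lam i) * M i) :=
        Finset.sum_le_sum_of_subset_of_nonneg hsub
          (fun M _ _ => Finset.prod_nonneg fun i _ => (Real.exp_pos _).le)
    _ = ∏ i, ∑ m ∈ Finset.range (N + 1), Real.exp ((g i - β * lam i) * m) :=
        (Finset.prod_univ_sum (fun _ : Fin n => Finset.range (N + 1))
          (fun i m => Real.exp ((g i - β * lam i) * m))).symm
    _ ≤ ∏ i, (1 - Real.exp (g i - β * lam i))⁻¹ := by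
        apply Finset.prod_le_prod
        · intro i _
          exact Finset.sum_nonneg fun m _ => (Real.exp_pos _).le
        · intro i _
          have hneg : g i - β * lam i < 0 := by
            obtain ⟨l, hl⟩ := block_cover hmono h0 hlast i
            have hge := hgi l i hl
            nlinarith [hlam i, hμ l, mul_nonneg hβ.le (hlam i)]
          have h0r : (0:ℝ) ≤ Real.exp (g i - β * lam i) := (Real.exp_pos _).le
          have h1r : Real.exp (g i - β * lam i) < 1 := Real.exp_lt_one_iff.mpr hneg
          calc ∑ m ∈ range (N + 1), Real.exp ((g i - β * lam i) * m)
              = ∑ m ∈ range (N + 1), Real.exp (g i - β * lam i) ^ m := by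
                refine Finset.sum_congr rfl fun m _ => ?_
                rw [mul_comm, Real.exp_nat_mul]
            _ ≤ _ := geom_bound h0r h1r _
    _ = ∏ l, zetaBlock lam nb l (μ l) β := by
        rw [← prod_block hmono h0 hlast (f := fun i => (1 - Real.exp (g i - β * lam i))⁻¹)]
        unfold zetaBlock
        exact Finset.prod_congr rfl fun l _ =>
          Finset.prod_congr rfl fun i hi => by rw [hgi l i hi]

end DeviationAux

open DeviationAux in
set_option maxHeartbeats 1600000 in
/-- Deviation bound (16) of the paper, with arbitrary centering constants `t l`. -/
theorem deviation_bound (n N k : ℕ) (hk : 1 ≤ k) (lam : Fin n → ℝ) (hlam : ∀ i, 0 ≤ lam i)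
    (nb : Fin (k + 1) → ℕ) (hmono : StrictMono nb) (h0 : nb 0 = 0) (hlast : nb (Fin.last k) = n)
    (t : Fin k → ℝ) (E Δ β ν c : ℝ) (hE : 0 ≤ E) (hΔ : 0 ≤ Δ) (hβ : 0 < β) (hν : ν < 0)
    (hc : 0 < c) (hνc : ν + c < 0) :
    ((((Omega n N).filter fun M =>
        energy lam M ≤ E ∧ Δ ≤ ∑ l, |(blockSum nb M l : ℝ) - t l|).card : ℕ) : ℝ)
      ≤ Real.exp (β * E - ν * N - c * Δ) *
          ∏ l, (zetaBlock lam nb l (ν + c) β * Real.exp (-c * t l) +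
                zetaBlock lam nb l (ν - c) β * Real.exp (c * t l)) := by
  classical
  set K : ℝ := Real.exp (β * E - ν * N - c * Δ) with hK
  set A : (Fin n → ℕ) → Fin k → ℝ := fun M l =>
    Real.exp (-c * t l) * ∏ i ∈ block n k nb l, Real.exp ((ν + c - β * lam i) * M i) with hA
  set B : (Fin n → ℕ) → Fin k → ℝ := fun M l =>
    Real.exp (c * t l) * ∏ i ∈ block n k nb l, Real.exp ((ν - c - β * lam i) * M i) with hB
  -- notation for the block exponent sum
  have hbs : ∀ (M : Fin n → ℕ) (l : Fin k),
      ((blockSum nb M l : ℕ) : ℝ) = ∑ i ∈ block n k nb l, (M i : ℝ) := by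
    intro M l; simp [blockSum]
  have hAeq : ∀ (M : Fin n → ℕ) (l : Fin k),
      A M l = Real.exp ((∑ i ∈ block n k nb l, (ν - β * lam i) * M i)
        + c * ((blockSum nb M l : ℝ) - t l)) := by
    intro M l
    rw [hA]
    dsimp only
    rw [← Real.exp_sum, ← Real.exp_add]
    congr 1
    rw [hbs M l]
    have hsum : ∑ x ∈ block n k nb l, (ν + c - β * lam x) * (M x : ℝ)
        = (∑ i ∈ block n k nb l, (ν - β * lam i) * (M i : ℝ))
          + c * ∑ i ∈ block n k nb l, (M i : ℝ) := by
      rw [Finset.mul_sum, ← Finset.sum_add_distrib]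
      exact Finset.sum_congr rfl fun i _ => by ring
    rw [hsum]
    ring
  have hBeq : ∀ (M : Fin n → ℕ) (l : Fin k),
      B M l = Real.exp ((∑ i ∈ block n k nb l, (ν - β * lam i) * M i)
        - c * ((blockSum nb M l : ℝ) - t l)) := by
    intro M l
    rw [hB]
    dsimp only
    rw [← Real.exp_sum, ← Real.exp_add]
    congr 1
    rw [hbs M l]
    have hsum : ∑ x ∈ block n k nb l, (ν - c - β * lam x) * (M x : ℝ)
        = (∑ i ∈ block n k nb l, (ν - β * lam i) * (M i : ℝ))
          - c * ∑ i ∈ block n k nb l, (M i : ℝ) := by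
      rw [Finset.mul_sum, ← Finset.sum_sub_distrib]
      exact Finset.sum_congr rfl fun i _ => by ring
    rw [hsum]
    ring
  have hABnonneg : ∀ (M : Fin n → ℕ) (l : Fin k), 0 ≤ A M l + B M l := by
    intro M l
    rw [hAeq, hBeq]
    positivity
  -- pointwise bound
  have pointwise : ∀ M ∈ (Omega n N).filter fun M =>
        energy lam M ≤ E ∧ Δ ≤ ∑ l, |(blockSum nb M l : ℝ) - t l|,
      (1 : ℝ) ≤ K * ∏ l, (A M l + B M l) := by
    intro M hM
    rw [Finset.mem_filter] at hM
    obtain ⟨hMΩ, hME, hMΔ⟩ := hM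
    have hsumM : ∑ i, M i = N := Finset.Nat.mem_antidiagonalTuple.mp hMΩ
    have lower : ∀ l : Fin k,
        Real.exp ((∑ i ∈ block n k nb l, (ν - β * lam i) * M i)
            + c * |(blockSum nb M l : ℝ) - t l|) ≤ A M l + B M l := by
      intro l
      rw [hAeq, hBeq]
      set σ := ∑ i ∈ block n k nb l, (ν - β * lam i) * (M i : ℝ)
      set x := (blockSum nb M l : ℝ) - t l
      rcases abs_cases x with ⟨h1, _⟩ | ⟨h1, _⟩
      · rw [h1]
        have := Real.exp_pos (σ - c * x)
        linarith
      · rw [h1]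
        have h2 : c * -x = σ + c * -x - σ := by ring
        have := Real.exp_pos (σ + c * x)
        have h3 : σ + c * -x = σ - c * x := by ring
        rw [mul_neg, ← sub_eq_add_neg]
        linarith
    have hσtot : ∑ l, ∑ i ∈ block n k nb l, (ν - β * lam i) * (M i : ℝ)
        = ν * N - β * energy lam M := by
      rw [sum_block hmono h0 hlast]
      have hMN : ∑ i, (M i : ℝ) = (N : ℝ) := by
        rw [← hsumM]; push_cast; rfl
      unfold energy
      rw [← hMN, Finset.mul_sum, Finset.mul_sum, ← Finset.sum_sub_distrib]
      exact Finset.sum_congr rfl fun i _ => by ring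
    have prodlower : Real.exp (ν * N - β * energy lam M
          + c * ∑ l, |(blockSum nb M l : ℝ) - t l|) ≤ ∏ l, (A M l + B M l) := by
      calc Real.exp (ν * N - β * energy lam M + c * ∑ l, |(blockSum nb M l : ℝ) - t l|)
          = ∏ l, Real.exp ((∑ i ∈ block n k nb l, (ν - β * lam i) * M i)
              + c * |(blockSum nb M l : ℝ) - t l|) := by
            rw [← Real.exp_sum]
            congr 1
            rw [Finset.sum_add_distrib, ← Finset.mul_sum, hσtot]
        _ ≤ ∏ l, (A M l + B M l) :=
            Finset.prod_le_prod (fun l _ => (Real.exp_pos _).le) (fun l _ => lower l)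
    have hexp : Real.exp (ν * N - β * E + c * Δ)
        ≤ Real.exp (ν * N - β * energy lam M + c * ∑ l, |(blockSum nb M l : ℝ) - t l|) := by
      apply Real.exp_le_exp.mpr
      have := mul_le_mul_of_nonneg_left hME hβ.le
      have := mul_le_mul_of_nonneg_left hMΔ hc.le
      linarith
    have hone : (1 : ℝ) = K * Real.exp (ν * N - β * E + c * Δ) := by
      rw [hK, ← Real.exp_add]
      have : β * E - ν * N - c * Δ + (ν * N - β * E + c * Δ) = 0 := by ring
      rw [this, Real.exp_zero]
    rw [hone]
    exact mul_le_mul_of_nonneg_left (hexp.trans prodlower) (Real.exp_pos _).le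
  -- step B : sum bound
  have sumle : ∑ M ∈ Omega n N, ∏ l, (A M l + B M l)
      ≤ ∏ l, (zetaBlock lam nb l (ν + c) β * Real.exp (-c * t l) +
              zetaBlock lam nb l (ν - c) β * Real.exp (c * t l)) := by
    rw [Finset.prod_add]
    have lhs_eq : ∀ M : Fin n → ℕ, ∏ l, (A M l + B M l)
        = ∑ T ∈ (univ : Finset (Fin k)).powerset, (∏ l ∈ T, A M l) * ∏ l ∈ univ \ T, B M l :=
      fun M => Finset.prod_add _ _ _
    rw [Finset.sum_congr rfl fun M _ => lhs_eq M, Finset.sum_comm]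
    apply Finset.sum_le_sum
    intro T _
    set μf : Fin k → ℝ := fun l => if l ∈ T then ν + c else ν - c with hμf
    have hμ : ∀ l, μf l < 0 := by
      intro l
      rw [hμf]
      dsimp only
      split <;> linarith
    have hsplitD : ∀ M : Fin n → ℕ,
        ∏ l, ∏ i ∈ block n k nb l, Real.exp ((μf l - β * lam i) * M i)
          = (∏ l ∈ T, ∏ i ∈ block n k nb l, Real.exp ((ν + c - β * lam i) * M i)) *
            ∏ l ∈ univ \ T, ∏ i ∈ block n k nb l, Real.exp ((ν - c - β * lam i) * M i) := by
      intro M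
      rw [← Finset.prod_sdiff (Finset.subset_univ T), mul_comm]
      congr 1
      · refine Finset.prod_congr rfl fun l hl => Finset.prod_congr rfl fun i _ => ?_
        have hv : μf l = ν + c := by simp only [hμf]; rw [if_pos hl]
        rw [hv]
      · refine Finset.prod_congr rfl fun l hl => Finset.prod_congr rfl fun i _ => ?_
        have hv : μf l = ν - c := by
          simp only [hμf]; rw [if_neg (Finset.mem_sdiff.mp hl).2]
        rw [hv]
    have factor : ∀ M : Fin n → ℕ, (∏ l ∈ T, A M l) * ∏ l ∈ univ \ T, B M l
        = ((∏ l ∈ T, Real.exp (-c * t l)) * ∏ l ∈ univ \ T, Real.exp (c * t l)) *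
          ∏ l, ∏ i ∈ block n k nb l, Real.exp ((μf l - β * lam i) * M i) := by
      intro M
      rw [hsplitD M, hA, hB]
      dsimp only
      rw [Finset.prod_mul_distrib, Finset.prod_mul_distrib]
      ring
    have hζsplit : ∏ l, zetaBlock lam nb l (μf l) β
        = (∏ l ∈ T, zetaBlock lam nb l (ν + c) β) *
          ∏ l ∈ univ \ T, zetaBlock lam nb l (ν - c) β := by
      rw [← Finset.prod_sdiff (Finset.subset_univ T), mul_comm]
      congr 1
      · refine Finset.prod_congr rfl fun l hl => ?_
        have hv : μf l = ν + c := by simp only [hμf]; rw [if_pos hl]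
        rw [hv]
      · refine Finset.prod_congr rfl fun l hl => ?_
        have hv : μf l = ν - c := by
          simp only [hμf]; rw [if_neg (Finset.mem_sdiff.mp hl).2]
        rw [hv]
    calc ∑ M ∈ Omega n N, (∏ l ∈ T, A M l) * ∏ l ∈ univ \ T, B M l
        = ((∏ l ∈ T, Real.exp (-c * t l)) * ∏ l ∈ univ \ T, Real.exp (c * t l)) *
            ∑ M ∈ Omega n N, ∏ l, ∏ i ∈ block n k nb l, Real.exp ((μf l - β * lam i) * M i) := by
          rw [Finset.mul_sum]
          exact Finset.sum_congr rfl fun M _ => factor M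
      _ ≤ ((∏ l ∈ T, Real.exp (-c * t l)) * ∏ l ∈ univ \ T, Real.exp (c * t l)) *
            ∏ l, zetaBlock lam nb l (μf l) β := by
          apply mul_le_mul_of_nonneg_left (sum_bound N lam hlam hmono h0 hlast β hβ μf hμ)
          positivity
      _ = (∏ l ∈ T, zetaBlock lam nb l (ν + c) β * Real.exp (-c * t l)) *
            ∏ l ∈ univ \ T, zetaBlock lam nb l (ν - c) β * Real.exp (c * t l) := by
          rw [hζsplit, Finset.prod_mul_distrib, Finset.prod_mul_distrib]
          ring
  -- assemble
  calc ((((Omega n N).filter fun M =>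
        energy lam M ≤ E ∧ Δ ≤ ∑ l, |(blockSum nb M l : ℝ) - t l|).card : ℕ) : ℝ)
      = ∑ M ∈ (Omega n N).filter fun M =>
          energy lam M ≤ E ∧ Δ ≤ ∑ l, |(blockSum nb M l : ℝ) - t l|, (1 : ℝ) := by
        simp
    _ ≤ ∑ M ∈ (Omega n N).filter fun M =>
          energy lam M ≤ E ∧ Δ ≤ ∑ l, |(blockSum nb M l : ℝ) - t l|,
          K * ∏ l, (A M l + B M l) := Finset.sum_le_sum pointwise
    _ ≤ ∑ M ∈ Omega n N, K * ∏ l, (A M l + B M l) :=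
        Finset.sum_le_sum_of_subset_of_nonneg (Finset.filter_subset _ _)
          (fun M _ _ => mul_nonneg (Real.exp_pos _).le
            (Finset.prod_nonneg fun l _ => hABnonneg M l))
    _ = K * ∑ M ∈ Omega n N, ∏ l, (A M l + B M l) := by rw [Finset.mul_sum]
    _ ≤ K * ∏ l, (zetaBlock lam nb l (ν + c) β * Real.exp (-c * t l) +
          zetaBlock lam nb l (ν - c) β * Real.exp (c * t l)) :=
        mul_le_mul_of_nonneg_left sumle (Real.exp_pos _).le
end
end

section
/- Let 0 = n₀ < n₁ < ⋯ < n_k = n be a block decomposition, β > 0, ν < 0, E ≥ 0, Δ > 0 and ε ∈ (0,1). Set c = Δ/D(ν,β), and assume ν + c < 0 and D(ν + c, β) ≤ (2 − ε)·D(ν,β). Then the number of configurations M with ∑ i, (M i)·λ i ≤ E and ∑_{l=1}^{k} |S_l(M) − ψ_l(ν,β)| ≥ Δ is at most 2^k · ζ(ν,β) · exp(β·E − ν·N) · exp(−ε·Δ²/(2·D(ν,β))). -/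
open Finset

noncomputable section

/-- `ψ_l(ν, β) = ∑_{i ∈ block l} (exp(β λ i − ν) − 1)⁻¹`. -/
def psiBlock {n k : ℕ} (lam : Fin n → ℝ) (nb : Fin (k + 1) → ℕ) (l : Fin k) (ν β : ℝ) : ℝ :=
  ∑ i ∈ block n k nb l, (Real.exp (β * lam i - ν) - 1)⁻¹

/-- `ζ(ν, β) = ∏_i (1 − exp(ν − β λ i))⁻¹`. -/
def zeta {n : ℕ} (lam : Fin n → ℝ) (ν β : ℝ) : ℝ :=
  ∏ i, (1 - Real.exp (ν - β * lam i))⁻¹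

/-- `D(ν, β) = ∑_i exp(β λ i − ν)/(exp(β λ i − ν) − 1)²`. -/
def Dfun {n : ℕ} (lam : Fin n → ℝ) (ν β : ℝ) : ℝ :=
  ∑ i, Real.exp (β * lam i - ν) / (Real.exp (β * lam i - ν) - 1) ^ 2

namespace ConcAux

lemma ratio_mono {x y : ℝ} (hx : 0 < x) (hxy : x ≤ y) (hy : y < 1) :
    x / (1 - x) ^ 2 ≤ y / (1 - y) ^ 2 := by
  have h1 : 0 < 1 - y := by linarith
  have h2 : 0 < 1 - x := by linarith
  rw [div_le_div_iff₀ (by positivity) (by positivity)]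
  nlinarith [mul_nonneg (sub_nonneg.2 hxy) (sub_nonneg.2 (show x * y ≤ 1 by nlinarith))]

lemma hasDerivAt_L (a t : ℝ) (h : t < a) :
    HasDerivAt (fun t => Real.log (1 - Real.exp (t - a)))
      (-(Real.exp (t - a) / (1 - Real.exp (t - a)))) t := by
  have hx : Real.exp (t - a) < 1 := Real.exp_lt_one_iff.2 (by linarith)
  have h1 : HasDerivAt (fun t : ℝ => t - a) 1 t := (hasDerivAt_id t).sub_const a
  have h2 : HasDerivAt (fun t : ℝ => Real.exp (t - a)) (Real.exp (t - a)) t := by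
    simpa using h1.exp
  have h3 : HasDerivAt (fun t : ℝ => 1 - Real.exp (t - a)) (-Real.exp (t - a)) t :=
    h2.const_sub 1
  have h4 := h3.log (by linarith : (1 : ℝ) - Real.exp (t - a) ≠ 0)
  simpa [neg_div] using h4

lemma hasDerivAt_P (a t : ℝ) (h : t < a) :
    HasDerivAt (fun t => -(Real.exp (t - a) / (1 - Real.exp (t - a))))
      (-(Real.exp (t - a) / (1 - Real.exp (t - a)) ^ 2)) t := by
  have hx : Real.exp (t - a) < 1 := Real.exp_lt_one_iff.2 (by linarith)
  have hne : (1 : ℝ) - Real.exp (t - a) ≠ 0 := by linarith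
  have h1 : HasDerivAt (fun t : ℝ => t - a) 1 t := (hasDerivAt_id t).sub_const a
  have h2 : HasDerivAt (fun t : ℝ => Real.exp (t - a)) (Real.exp (t - a)) t := by
    simpa using h1.exp
  have h3 : HasDerivAt (fun t : ℝ => 1 - Real.exp (t - a)) (-Real.exp (t - a)) t :=
    h2.const_sub 1
  have h4 := (h2.div h3 hne).neg
  convert h4 using 1
  · rfl
  · rfl
  · rfl
  field_simp
  ring


lemma taylor_key (a c : ℝ) (hc : 0 < c) (hac : c < a) (s : ℝ) (hs : s = c ∨ s = -c) :
    (1 - Real.exp (s - a))⁻¹ ≤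
      (1 - Real.exp (-a))⁻¹ *
        Real.exp (s * (Real.exp a - 1)⁻¹ +
          c ^ 2 * (Real.exp (a - c) / (Real.exp (a - c) - 1) ^ 2) / 2) := by
  set ψ : ℝ := (Real.exp a - 1)⁻¹ with hψ
  set K : ℝ := Real.exp (a - c) / (Real.exp (a - c) - 1) ^ 2 with hKdef
  have hea : 1 < Real.exp a := Real.one_lt_exp_iff.2 (by linarith)
  have heac : 1 < Real.exp (a - c) := Real.one_lt_exp_iff.2 (by linarith)
  -- alternative form of K
  have hK : K = Real.exp (c - a) / (1 - Real.exp (c - a)) ^ 2 := by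
    rw [hKdef, show c - a = -(a - c) by ring, Real.exp_neg]
    have h1 : Real.exp (a - c) ≠ 0 := (Real.exp_pos _).ne'
    have h2 : Real.exp (a - c) - 1 ≠ 0 := by linarith
    have h3 : 1 - (Real.exp (a - c))⁻¹ ≠ 0 := by
      have : (Real.exp (a - c))⁻¹ < 1 := by
        rw [inv_lt_one_iff₀]; right; exact heac
      linarith
    field_simp
  have hψ' : ψ = Real.exp (-a) / (1 - Real.exp (-a)) := by
    rw [hψ, Real.exp_neg]
    have h1 : Real.exp a ≠ 0 := (Real.exp_pos _).ne'
    have h2 : Real.exp a - 1 ≠ 0 := by linarith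
    have h3 : 1 - (Real.exp a)⁻¹ ≠ 0 := by
      have : (Real.exp a)⁻¹ < 1 := by rw [inv_lt_one_iff₀]; right; exact hea
      linarith
    field_simp
  set G : ℝ → ℝ := fun t =>
    Real.log (1 - Real.exp (t - a)) - Real.log (1 - Real.exp (-a)) + t * ψ + t ^ 2 * K / 2
    with hGdef
  set H : ℝ → ℝ := fun t => -(Real.exp (t - a) / (1 - Real.exp (t - a))) + ψ + t * K with hHdef
  have hG' : ∀ t, t < a → HasDerivAt G (H t) t := by
    intro t ht
    have h1 := ((hasDerivAt_L a t ht).sub_const (Real.log (1 - Real.exp (-a)))).add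
      ((hasDerivAt_id t).mul_const ψ)
    have h2 : HasDerivAt (fun t : ℝ => t ^ 2 * K / 2) (t * K) t := by
      have := (hasDerivAt_pow 2 t).mul_const (K / 2)
      convert this using 1
      · rfl
      · rfl
      · funext x; ring
      · simp; ring
    have := h1.add h2
    convert this using 1
    · rfl
    · rfl
    · rfl
    simp only [hHdef]; ring
  have hH' : ∀ t, t < a →
      HasDerivAt H (K - Real.exp (t - a) / (1 - Real.exp (t - a)) ^ 2) t := by
    intro t ht
    have h1 := ((hasDerivAt_P a t ht).add_const ψ).add ((hasDerivAt_id t).mul_const K)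
    convert h1 using 1
    · rfl
    · rfl
    · rfl
    ring
  -- H is monotone on [-c, c]
  have hlt : ∀ t ∈ Set.Icc (-c) c, t < a := fun t ht => lt_of_le_of_lt ht.2 hac
  have hHmono : MonotoneOn H (Set.Icc (-c) c) := by
    apply monotoneOn_of_deriv_nonneg (convex_Icc _ _)
    · intro t ht
      exact ((hH' t (hlt t ht)).continuousAt).continuousWithinAt
    · intro t ht
      rw [interior_Icc] at ht
      exact ((hH' t (hlt t (Set.mem_Icc_of_Ioo ht))).differentiableAt).differentiableWithinAt
    · intro t ht
      rw [interior_Icc] at ht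
      have ht' : t < a := hlt t (Set.mem_Icc_of_Ioo ht)
      rw [(hH' t ht').deriv]
      have hx1 : Real.exp (t - a) < 1 := Real.exp_lt_one_iff.2 (by linarith)
      have hy1 : Real.exp (c - a) < 1 := Real.exp_lt_one_iff.2 (by linarith)
      have := ratio_mono (x := Real.exp (t - a)) (y := Real.exp (c - a))
        (Real.exp_pos _) (Real.exp_le_exp.2 (by linarith [ht.2])) hy1
      rw [hK]
      linarith
  have hH0 : H 0 = 0 := by
    simp only [hHdef]
    rw [hψ']
    simp
  -- G is monotone on [0,c], antitone on [-c,0]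
  have hsub1 : Set.Icc (0:ℝ) c ⊆ Set.Icc (-c) c := Set.Icc_subset_Icc (by linarith) le_rfl
  have hsub2 : Set.Icc (-c) (0:ℝ) ⊆ Set.Icc (-c) c := Set.Icc_subset_Icc le_rfl (by linarith)
  have h0mem : (0:ℝ) ∈ Set.Icc (-c) c := by constructor <;> linarith
  have hGmono : MonotoneOn G (Set.Icc (0:ℝ) c) := by
    apply monotoneOn_of_deriv_nonneg (convex_Icc _ _)
    · intro t ht
      exact ((hG' t (hlt t (hsub1 ht))).continuousAt).continuousWithinAt
    · intro t ht
      rw [interior_Icc] at ht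
      exact ((hG' t (hlt t (hsub1 (Set.mem_Icc_of_Ioo ht)))).differentiableAt).differentiableWithinAt
    · intro t ht
      rw [interior_Icc] at ht
      have htm : t ∈ Set.Icc (-c) c := hsub1 (Set.mem_Icc_of_Ioo ht)
      rw [(hG' t (hlt t htm)).deriv]
      have := hHmono h0mem htm ht.1.le
      rw [hH0] at this
      exact this
  have hGanti : AntitoneOn G (Set.Icc (-c) (0:ℝ)) := by
    apply antitoneOn_of_deriv_nonpos (convex_Icc _ _)
    · intro t ht
      exact ((hG' t (hlt t (hsub2 ht))).continuousAt).continuousWithinAt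
    · intro t ht
      rw [interior_Icc] at ht
      exact ((hG' t (hlt t (hsub2 (Set.mem_Icc_of_Ioo ht)))).differentiableAt).differentiableWithinAt
    · intro t ht
      rw [interior_Icc] at ht
      have htm : t ∈ Set.Icc (-c) c := hsub2 (Set.mem_Icc_of_Ioo ht)
      rw [(hG' t (hlt t htm)).deriv]
      have := hHmono htm h0mem ht.2.le
      rw [hH0] at this
      exact this
  have hG0 : G 0 = 0 := by simp [hGdef]
  have hGs : 0 ≤ G s := by
    rcases hs with rfl | rfl
    · have := hGmono (Set.left_mem_Icc.2 hc.le) (Set.right_mem_Icc.2 hc.le) hc.le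
      rw [hG0] at this; exact this
    · have := hGanti (Set.left_mem_Icc.2 (by linarith)) (Set.right_mem_Icc.2 (by linarith))
        (by linarith : -c ≤ (0:ℝ))
      rw [hG0] at this; exact this
  -- unfold G s and conclude
  have hs2 : s ^ 2 = c ^ 2 := by rcases hs with rfl | rfl <;> ring
  have hsa : s < a := by rcases hs with rfl | rfl <;> linarith
  have hXpos : 0 < 1 - Real.exp (s - a) := by
    have : Real.exp (s - a) < 1 := Real.exp_lt_one_iff.2 (by linarith)
    linarith
  have hYpos : 0 < 1 - Real.exp (-a) := by
    have : Real.exp (-a) < 1 := Real.exp_lt_one_iff.2 (by linarith)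
    linarith
  have key : 0 ≤ Real.log (1 - Real.exp (s - a)) - Real.log (1 - Real.exp (-a))
      + s * ψ + c ^ 2 * K / 2 := by
    have := hGs
    simp only [hGdef] at this
    rw [hs2] at this
    exact this
  calc (1 - Real.exp (s - a))⁻¹
      = Real.exp (-(Real.log (1 - Real.exp (s - a)))) := by
        rw [Real.exp_neg, Real.exp_log hXpos]
    _ ≤ Real.exp (-(Real.log (1 - Real.exp (-a))) + (s * ψ + c ^ 2 * K / 2)) := by
        rw [Real.exp_le_exp]; linarith
    _ = (1 - Real.exp (-a))⁻¹ * Real.exp (s * ψ + c ^ 2 * K / 2) := by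
        rw [Real.exp_add, Real.exp_neg, Real.exp_log hYpos]


lemma geom_bound {n : ℕ} (N : ℕ) (r : Fin n → ℝ) (h0 : ∀ i, 0 ≤ r i) (h1 : ∀ i, r i < 1) :
    ∑ M ∈ Omega n N, ∏ i, r i ^ M i ≤ ∏ i, (1 - r i)⁻¹ := by
  have hsub : Omega n N ⊆ Fintype.piFinset fun _ : Fin n => Finset.range (N + 1) := by
    intro M hM
    rw [Omega, Finset.Nat.mem_antidiagonalTuple] at hM
    rw [Fintype.mem_piFinset]
    intro i
    rw [Finset.mem_range, Nat.lt_succ_iff, ← hM]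
    exact Finset.single_le_sum (f := fun i => M i) (fun _ _ => Nat.zero_le _) (Finset.mem_univ i)
  calc ∑ M ∈ Omega n N, ∏ i, r i ^ M i
      ≤ ∑ M ∈ Fintype.piFinset (fun _ : Fin n => Finset.range (N + 1)), ∏ i, r i ^ M i :=
        Finset.sum_le_sum_of_subset_of_nonneg hsub (fun M _ _ => Finset.prod_nonneg fun i _ => pow_nonneg (h0 i) _)
    _ = ∏ i, ∑ m ∈ Finset.range (N + 1), r i ^ m := (Finset.prod_univ_sum _ _).symm
    _ ≤ ∏ i, (1 - r i)⁻¹ := by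
        apply Finset.prod_le_prod
        · intro i _
          apply Finset.sum_nonneg
          intro m _; exact pow_nonneg (h0 i) m
        · intro i _
          have hpos : 0 < 1 - r i := by linarith [h1 i]
          have hne : r i ≠ 1 := ne_of_lt (h1 i)
          rw [geom_sum_eq hne]
          have heq : (r i ^ (N + 1) - 1) / (r i - 1) = (1 - r i ^ (N + 1)) / (1 - r i) := by
            rw [← neg_div_neg_eq]; ring_nf
          rw [heq, div_le_iff₀ hpos, inv_mul_cancel₀ (ne_of_gt hpos)]
          have : 0 ≤ r i ^ (N + 1) := pow_nonneg (h0 i) _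
          linarith

variable {n k : ℕ} {nb : Fin (k + 1) → ℕ}

lemma block_unique (hmono : StrictMono nb) {i : Fin n} {l l' : Fin k}
    (h : i ∈ block n k nb l) (h' : i ∈ block n k nb l') : l = l' := by
  simp only [block, Finset.mem_filter, Finset.mem_univ, true_and] at h h'
  by_contra hne
  rcases lt_or_gt_of_ne hne with hlt | hlt
  · have hle : nb l.succ ≤ nb l'.castSucc := hmono.monotone (by
      rw [Fin.le_def]
      simp only [Fin.val_succ, Fin.coe_castSucc]
      exact hlt)
    omega
  · have hle : nb l'.succ ≤ nb l.castSucc := hmono.monotone (by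
      rw [Fin.le_def]
      simp only [Fin.val_succ, Fin.coe_castSucc]
      exact hlt)
    omega

lemma block_exists (hmono : StrictMono nb) (h0 : nb 0 = 0) (hlast : nb (Fin.last k) = n)
    (i : Fin n) : ∃ l : Fin k, i ∈ block n k nb l := by
  classical
  set T : Finset (Fin (k + 1)) := Finset.univ.filter (fun l => nb l ≤ (i : ℕ)) with hT
  have h0T : (0 : Fin (k + 1)) ∈ T := by simp [hT, h0]
  have hTne : T.Nonempty := ⟨0, h0T⟩
  set L := T.max' hTne with hL
  have hLT : L ∈ T := T.max'_mem hTne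
  have hLi : nb L ≤ (i : ℕ) := by
    simpa [hT] using hLT
  have hne : (L : ℕ) ≠ k := by
    intro h
    have : L = Fin.last k := by
      apply Fin.ext; simpa using h
    rw [this, hlast] at hLi
    exact absurd hLi (not_le.2 i.isLt)
  have hLk : (L : ℕ) < k := lt_of_le_of_ne (Nat.lt_succ_iff.mp L.isLt) hne
  refine ⟨⟨(L : ℕ), hLk⟩, ?_⟩
  simp only [block, Finset.mem_filter, Finset.mem_univ, true_and]
  constructor
  · have : (⟨(L : ℕ), hLk⟩ : Fin k).castSucc = L := by
      apply Fin.ext; simp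
    rw [this]; exact hLi
  · by_contra hcon
    push_neg at hcon
    have hmem : ((⟨(L : ℕ), hLk⟩ : Fin k).succ) ∈ T := by
      simp only [hT, Finset.mem_filter, Finset.mem_univ, true_and]
      exact hcon
    have := T.le_max' _ hmem
    rw [← hL] at this
    rw [Fin.le_def] at this
    simp at this
  
lemma sum_blocks (hmono : StrictMono nb) (h0 : nb 0 = 0) (hlast : nb (Fin.last k) = n)
    (f : Fin n → ℝ) :
    ∑ l, ∑ i ∈ block n k nb l, f i = ∑ i, f i := by
  classical
  calc ∑ l, ∑ i ∈ block n k nb l, f i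
      = ∑ l, ∑ i : Fin n, if i ∈ block n k nb l then f i else 0 := by
        refine Finset.sum_congr rfl fun l _ => ?_
        rw [Finset.sum_ite_mem, Finset.univ_inter]
    _ = ∑ i : Fin n, ∑ l, if i ∈ block n k nb l then f i else 0 := Finset.sum_comm
    _ = ∑ i, f i := by
        refine Finset.sum_congr rfl fun i _ => ?_
        obtain ⟨l₀, hl₀⟩ := block_exists hmono h0 hlast i
        rw [Finset.sum_eq_single l₀]
        · simp [hl₀]
        · intro l _ hne
          rw [if_neg]
          intro h
          exact hne (block_unique hmono h hl₀)
        · intro h; exact absurd (Finset.mem_univ l₀) h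

lemma sg_eval (hmono : StrictMono nb) (v : Fin k → ℝ) {i : Fin n} {l₀ : Fin k}
    (h : i ∈ block n k nb l₀) :
    (∑ l, if i ∈ block n k nb l then v l else 0) = v l₀ := by
  classical
  rw [Finset.sum_eq_single l₀]
  · simp [h]
  · intro l _ hne
    rw [if_neg]
    intro hmem
    exact hne (block_unique hmono hmem h)
  · intro h'; exact absurd (Finset.mem_univ l₀) h'


end ConcAux

/-- Concentration estimate preceding relation (20), obtained from (16) with
`c = Δ / D(ν,β)` by a second-order Taylor expansion of `log ζ` in `ν`. -/
theorem concentration_bound (n N k : ℕ) (hk : 1 ≤ k) (lam : Fin n → ℝ) (hlam : ∀ i, 0 ≤ lam i)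
    (nb : Fin (k + 1) → ℕ) (hmono : StrictMono nb) (h0 : nb 0 = 0) (hlast : nb (Fin.last k) = n)
    (β ν E Δ ε : ℝ) (hβ : 0 < β) (hν : ν < 0) (hE : 0 ≤ E) (hΔ : 0 < Δ)
    (hε0 : 0 < ε) (hε1 : ε < 1)
    (hc : ν + Δ / Dfun lam ν β < 0)
    (hD : Dfun lam (ν + Δ / Dfun lam ν β) β ≤ (2 - ε) * Dfun lam ν β) :
    ((((Omega n N).filter fun M =>
        energy lam M ≤ E ∧ Δ ≤ ∑ l, |(blockSum nb M l : ℝ) - psiBlock lam nb l ν β|).card : ℕ) : ℝ)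
      ≤ 2 ^ k * zeta lam ν β * Real.exp (β * E - ν * N) *
          Real.exp (-ε * Δ ^ 2 / (2 * Dfun lam ν β)) := by
  classical
  set D := Dfun lam ν β with hDdef
  set c := Δ / D with hcdef
  have hn : 0 < n := by
    have h01 : (0 : Fin (k+1)) < Fin.last k := by
      rw [Fin.lt_def]; simp; omega
    have := hmono h01
    omega
  have : Nonempty (Fin n) := ⟨⟨0, hn⟩⟩
  have hBlam : ∀ i : Fin n, 0 ≤ β * lam i := fun i => mul_nonneg hβ.le (hlam i)
  have hDpos : 0 < D := by
    rw [hDdef, Dfun]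
    apply Finset.sum_pos _ Finset.univ_nonempty
    intro i _
    have h1 : 1 < Real.exp (β * lam i - ν) := Real.one_lt_exp_iff.2 (by linarith [hBlam i])
    exact div_pos (Real.exp_pos _) (pow_pos (by linarith) 2)
  have hcpos : 0 < c := div_pos hΔ hDpos
  have hca : ∀ i : Fin n, c < β * lam i - ν := fun i => by linarith [hBlam i]
  have hzpos : 0 < zeta lam ν β := by
    rw [zeta]
    apply Finset.prod_pos
    intro i _
    have : Real.exp (ν - β * lam i) < 1 := Real.exp_lt_one_iff.2 (by linarith [hBlam i])
    exact inv_pos.2 (by linarith)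
  -- sign machinery
  set sgv : Bool → ℝ := fun b => if b then 1 else -1 with hsgv
  set sg : (Fin k → Bool) → Fin n → ℝ :=
    fun σ i => ∑ l, if i ∈ block n k nb l then sgv (σ l) else 0 with hsgdef
  have hsg : ∀ σ i l, i ∈ block n k nb l → sg σ i = sgv (σ l) := by
    intro σ i l h
    exact ConcAux.sg_eval hmono (fun l => sgv (σ l)) h
  have hsgval : ∀ σ i, sg σ i = 1 ∨ sg σ i = -1 := by
    intro σ i
    obtain ⟨l, hl⟩ := ConcAux.block_exists hmono h0 hlast i
    rw [hsg σ i l hl]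
    by_cases hb : σ l <;> simp [hsgv, hb]
  set Psi : (Fin k → Bool) → ℝ := fun σ => ∑ l, sgv (σ l) * psiBlock lam nb l ν β with hPsidef
  set Aset : (Fin k → Bool) → Finset (Fin n → ℕ) := fun σ => (Omega n N).filter
    (fun M => energy lam M ≤ E ∧
      Δ ≤ ∑ l, sgv (σ l) * ((blockSum nb M l : ℝ) - psiBlock lam nb l ν β)) with hAdef
  -- the key per-sign-vector bound
  have key : ∀ σ : Fin k → Bool, ((Aset σ).card : ℝ) ≤
      zeta lam ν β * Real.exp (β * E - ν * N) * Real.exp (-ε * Δ ^ 2 / (2 * D)) := by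
    intro σ
    set r : Fin n → ℝ := fun i => Real.exp (ν + c * sg σ i - β * lam i) with hrdef
    have hsgle : ∀ i, c * sg σ i ≤ c := by
      intro i
      rcases hsgval σ i with h | h <;> rw [h] <;> nlinarith
    have hr0 : ∀ i, 0 ≤ r i := fun i => (Real.exp_pos _).le
    have hr1 : ∀ i, r i < 1 := fun i => Real.exp_lt_one_iff.2 (by linarith [hBlam i, hsgle i])
    set C0 : ℝ := β * E - ν * N - c * Δ - c * Psi σ with hC0
    -- Step A : pointwise bound
    have stepA : ∀ M ∈ Aset σ, (1:ℝ) ≤ Real.exp C0 * ∏ i, r i ^ M i := by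
      intro M hM
      simp only [hAdef, Finset.mem_filter] at hM
      obtain ⟨hMΩ, hMe, hMΔ⟩ := hM
      have hsumN : ∑ i, (M i : ℝ) = N := by
        have h' := Finset.Nat.mem_antidiagonalTuple.mp hMΩ
        exact_mod_cast congrArg (Nat.cast (R := ℝ)) h'
      have hprod : ∏ i, r i ^ M i =
          Real.exp (∑ i, (M i : ℝ) * (ν + c * sg σ i - β * lam i)) := by
        rw [Real.exp_sum]
        refine Finset.prod_congr rfl fun i _ => ?_
        exact (Real.exp_nat_mul _ (M i)).symm
      have hS : ∑ i, sg σ i * (M i : ℝ) = ∑ l, sgv (σ l) * (blockSum nb M l : ℝ) := by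
        rw [← ConcAux.sum_blocks hmono h0 hlast (fun i => sg σ i * (M i : ℝ))]
        refine Finset.sum_congr rfl fun l _ => ?_
        calc ∑ i ∈ block n k nb l, sg σ i * (M i : ℝ)
            = ∑ i ∈ block n k nb l, sgv (σ l) * (M i : ℝ) :=
              Finset.sum_congr rfl fun i hi => by rw [hsg σ i l hi]
          _ = sgv (σ l) * (blockSum nb M l : ℝ) := by
              rw [← Finset.mul_sum, blockSum, Nat.cast_sum]
      have hexp : ∑ i, (M i : ℝ) * (ν + c * sg σ i - β * lam i) =
          ν * N - β * energy lam M + c * ∑ l, sgv (σ l) * (blockSum nb M l : ℝ) := by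
        rw [← hS, ← hsumN, energy]
        rw [Finset.mul_sum, Finset.mul_sum, Finset.mul_sum, ← Finset.sum_sub_distrib,
          ← Finset.sum_add_distrib]
        exact Finset.sum_congr rfl fun i _ => by ring
      have hMΔ' : Δ ≤ (∑ l, sgv (σ l) * (blockSum nb M l : ℝ)) - Psi σ := by
        rw [hPsidef]
        have : ∑ l, sgv (σ l) * ((blockSum nb M l : ℝ) - psiBlock lam nb l ν β)
            = (∑ l, sgv (σ l) * (blockSum nb M l : ℝ))
              - ∑ l, sgv (σ l) * psiBlock lam nb l ν β := by
          rw [← Finset.sum_sub_distrib]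
          exact Finset.sum_congr rfl fun l _ => by ring
        rw [this] at hMΔ
        exact hMΔ
      rw [hprod, ← Real.exp_add]
      apply Real.one_le_exp
      rw [hexp, hC0]
      have h1 : 0 ≤ β * (E - energy lam M) := mul_nonneg hβ.le (by linarith)
      have h2 := mul_le_mul_of_nonneg_left hMΔ' hcpos.le
      nlinarith
    -- Step B : sum over configurations
    have stepB : ((Aset σ).card : ℝ) ≤ Real.exp C0 * ∏ i, (1 - r i)⁻¹ := by
      calc ((Aset σ).card : ℝ) = ∑ _M ∈ Aset σ, (1:ℝ) := by simp
        _ ≤ ∑ M ∈ Aset σ, Real.exp C0 * ∏ i, r i ^ M i := Finset.sum_le_sum stepA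
        _ = Real.exp C0 * ∑ M ∈ Aset σ, ∏ i, r i ^ M i := by rw [← Finset.mul_sum]
        _ ≤ Real.exp C0 * ∑ M ∈ Omega n N, ∏ i, r i ^ M i := by
            apply mul_le_mul_of_nonneg_left _ (Real.exp_nonneg _)
            apply Finset.sum_le_sum_of_subset_of_nonneg
            · rw [hAdef]; exact Finset.filter_subset _ _
            · intro M _ _
              exact Finset.prod_nonneg fun i _ => pow_nonneg (hr0 i) _
        _ ≤ Real.exp C0 * ∏ i, (1 - r i)⁻¹ :=
            mul_le_mul_of_nonneg_left (ConcAux.geom_bound N r hr0 hr1) (Real.exp_nonneg _)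
    -- Step C : Taylor expansion of the product
    have tay : ∀ i : Fin n, (1 - r i)⁻¹ ≤ (1 - Real.exp (ν - β * lam i))⁻¹ *
        Real.exp ((c * sg σ i) * (Real.exp (β * lam i - ν) - 1)⁻¹ +
          c ^ 2 * (Real.exp (β * lam i - (ν + c)) /
            (Real.exp (β * lam i - (ν + c)) - 1) ^ 2) / 2) := by
      intro i
      have hs : c * sg σ i = c ∨ c * sg σ i = -c := by
        rcases hsgval σ i with h | h <;> rw [h] <;> [left; right] <;> ring
      have h := ConcAux.taylor_key (β * lam i - ν) c hcpos (hca i) (c * sg σ i) hs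
      have e1 : c * sg σ i - (β * lam i - ν) = ν + c * sg σ i - β * lam i := by ring
      have e2 : -(β * lam i - ν) = ν - β * lam i := by ring
      have e3 : β * lam i - ν - c = β * lam i - (ν + c) := by ring
      rw [e1, e2, e3] at h
      exact h
    have hPsiSum : ∑ i, sg σ i * (Real.exp (β * lam i - ν) - 1)⁻¹ = Psi σ := by
      have h3 : Psi σ = ∑ l, sgv (σ l) * psiBlock lam nb l ν β := rfl
      rw [h3, ← ConcAux.sum_blocks hmono h0 hlast
        (fun i => sg σ i * (Real.exp (β * lam i - ν) - 1)⁻¹)]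
      refine Finset.sum_congr rfl fun l _ => ?_
      calc ∑ i ∈ block n k nb l, sg σ i * (Real.exp (β * lam i - ν) - 1)⁻¹
          = ∑ i ∈ block n k nb l, sgv (σ l) * (Real.exp (β * lam i - ν) - 1)⁻¹ :=
            Finset.sum_congr rfl fun i hi => by rw [hsg σ i l hi]
        _ = sgv (σ l) * psiBlock lam nb l ν β := by rw [← Finset.mul_sum, psiBlock]
    have prodC : ∏ i, (1 - r i)⁻¹ ≤
        zeta lam ν β * Real.exp (c * Psi σ + c ^ 2 * Dfun lam (ν + c) β / 2) := by
      have h1 : ∏ i, (1 - r i)⁻¹ ≤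
          ∏ i, ((1 - Real.exp (ν - β * lam i))⁻¹ *
            Real.exp ((c * sg σ i) * (Real.exp (β * lam i - ν) - 1)⁻¹ +
              c ^ 2 * (Real.exp (β * lam i - (ν + c)) /
                (Real.exp (β * lam i - (ν + c)) - 1) ^ 2) / 2)) := by
        apply Finset.prod_le_prod
        · intro i _
          exact inv_nonneg.2 (by linarith [hr1 i])
        · intro i _
          exact tay i
      refine h1.trans (le_of_eq ?_)
      rw [Finset.prod_mul_distrib, ← Real.exp_sum, zeta]
      congr 1
      have h2 : ∑ i, (c * sg σ i) * (Real.exp (β * lam i - ν) - 1)⁻¹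
          = c * ∑ i, sg σ i * (Real.exp (β * lam i - ν) - 1)⁻¹ := by
        rw [Finset.mul_sum]
        exact Finset.sum_congr rfl fun i _ => by ring
      have h3 : ∑ i, c ^ 2 * (Real.exp (β * lam i - (ν + c)) /
            (Real.exp (β * lam i - (ν + c)) - 1) ^ 2) / 2
          = c ^ 2 * Dfun lam (ν + c) β / 2 := by
        rw [Dfun, Finset.mul_sum, Finset.sum_div]
      rw [Finset.sum_add_distrib, h2, hPsiSum, h3]
    -- combine
    calc ((Aset σ).card : ℝ)
        ≤ Real.exp C0 * (zeta lam ν β *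
            Real.exp (c * Psi σ + c ^ 2 * Dfun lam (ν + c) β / 2)) :=
          stepB.trans (mul_le_mul_of_nonneg_left prodC (Real.exp_nonneg _))
      _ = zeta lam ν β * Real.exp (β * E - ν * N) *
            Real.exp (-c * Δ + c ^ 2 * Dfun lam (ν + c) β / 2) := by
          rw [mul_left_comm, ← Real.exp_add, mul_assoc, ← Real.exp_add]
          congr 2
          ring
      _ ≤ zeta lam ν β * Real.exp (β * E - ν * N) *
            Real.exp (-ε * Δ ^ 2 / (2 * D)) := by
          apply mul_le_mul_of_nonneg_left _ (by positivity)
          rw [Real.exp_le_exp]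
          have h1 : c ^ 2 * Dfun lam (ν + c) β / 2 ≤ c ^ 2 * ((2 - ε) * D) / 2 := by
            have := mul_le_mul_of_nonneg_left hD (sq_nonneg c)
            linarith
          have h2 : -c * Δ + c ^ 2 * ((2 - ε) * D) / 2 = -ε * Δ ^ 2 / (2 * D) := by
            rw [hcdef]
            field_simp
            ring
          linarith
  -- union over sign vectors
  have hsubE : ((Omega n N).filter fun M =>
      energy lam M ≤ E ∧ Δ ≤ ∑ l, |(blockSum nb M l : ℝ) - psiBlock lam nb l ν β|) ⊆
      Finset.univ.biUnion Aset := by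
    intro M hM
    rw [Finset.mem_filter] at hM
    obtain ⟨hMΩ, hMe, hMΔ⟩ := hM
    apply Finset.mem_biUnion.2
    refine ⟨fun l => decide (psiBlock lam nb l ν β ≤ (blockSum nb M l : ℝ)),
      Finset.mem_univ _, ?_⟩
    simp only [hAdef, Finset.mem_filter]
    refine ⟨hMΩ, hMe, ?_⟩
    have heq : ∑ l, sgv (decide (psiBlock lam nb l ν β ≤ (blockSum nb M l : ℝ))) *
        ((blockSum nb M l : ℝ) - psiBlock lam nb l ν β)
        = ∑ l, |(blockSum nb M l : ℝ) - psiBlock lam nb l ν β| := by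
      refine Finset.sum_congr rfl fun l _ => ?_
      by_cases hp : psiBlock lam nb l ν β ≤ (blockSum nb M l : ℝ)
      · rw [abs_of_nonneg (by linarith)]
        simp [hsgv, hp]
      · push_neg at hp
        rw [abs_of_neg (by linarith)]
        simp only [hsgv]
        rw [if_neg (by simpa using hp.not_ge)]
        ring
    rw [heq]
    exact hMΔ
  calc ((((Omega n N).filter fun M =>
        energy lam M ≤ E ∧ Δ ≤ ∑ l, |(blockSum nb M l : ℝ) - psiBlock lam nb l ν β|).card : ℕ) : ℝ)
      ≤ ((Finset.univ.biUnion Aset).card : ℝ) := by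
        exact_mod_cast Finset.card_le_card hsubE
    _ ≤ ∑ σ : Fin k → Bool, ((Aset σ).card : ℝ) := by
        exact_mod_cast Finset.card_biUnion_le
    _ ≤ ∑ _σ : Fin k → Bool, (zeta lam ν β * Real.exp (β * E - ν * N) *
          Real.exp (-ε * Δ ^ 2 / (2 * D))) := Finset.sum_le_sum fun σ _ => key σ
    _ = 2 ^ k * zeta lam ν β * Real.exp (β * E - ν * N) *
          Real.exp (-ε * Δ ^ 2 / (2 * D)) := by
        rw [Finset.sum_const, Finset.card_univ]
        simp [Fintype.card_fun]
        ring
end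
end

section
/- Let ω : Fin k → ℝ with ω i > 0 for all i, and for λ > 0 let N(λ) be the number of tuples m : Fin k → ℕ with ∑ i, (ω i)·(2·(m i) + 1) ≤ λ (the number of eigenvalues of the k-dimensional harmonic oscillator not exceeding λ). Then log N(λ) / log λ tends to k as λ → ∞. -/
open Filter


lemma osc_aux1 (c : ℝ) :
    Tendsto (fun x : ℝ => Real.log (x + c) / Real.log x) atTop (nhds 1) := by
  have h1 : Tendsto (fun x : ℝ => Real.log (1 + c / x)) atTop (nhds 0) := by
    have h0 : Tendsto (fun x : ℝ => 1 + c / x) atTop (nhds 1) := by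
      have : Tendsto (fun x : ℝ => c / x) atTop (nhds 0) :=
        tendsto_const_nhds.div_atTop tendsto_id
      simpa using (tendsto_const_nhds (x := (1:ℝ))).add this
    have := (Real.continuousAt_log one_ne_zero).tendsto.comp h0
    simpa [Function.comp_def] using this
  have h2 : Tendsto (fun x : ℝ => 1 + Real.log (1 + c / x) / Real.log x) atTop (nhds 1) := by
    have h := h1.div_atTop Real.tendsto_log_atTop
    simpa using (tendsto_const_nhds (x := (1:ℝ))).add h
  refine Tendsto.congr' ?_ h2
  filter_upwards [eventually_gt_atTop (max 1 (-c)), eventually_gt_atTop 0] with x hx hx0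
  have hx1 : 1 < x := lt_of_le_of_lt (le_max_left _ _) hx
  have hxc : 0 < x + c := by
    have := lt_of_le_of_lt (le_max_right _ _) hx; linarith
  have hlog : Real.log x ≠ 0 := ne_of_gt (Real.log_pos hx1)
  have h1c : (0:ℝ) < 1 + c / x := by
    have : 1 + c / x = (x + c) / x := by field_simp
    rw [this]; positivity
  have hxx : x + c = x * (1 + c / x) := by field_simp
  rw [hxx, Real.log_mul (ne_of_gt hx0) (ne_of_gt h1c), add_div, div_self hlog]

lemma osc_aux2 (k c d : ℝ) (hd : 0 < d) :
    Tendsto (fun x : ℝ => k * Real.log ((x + c) / d) / Real.log x) atTop (nhds k) := by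
  have h := (osc_aux1 c).const_mul k
  have h2 : Tendsto (fun x : ℝ => k * Real.log d / Real.log x) atTop (nhds 0) :=
    tendsto_const_nhds.div_atTop Real.tendsto_log_atTop
  have h3 := h.sub h2
  rw [mul_one, sub_zero] at h3
  refine Tendsto.congr' ?_ h3
  filter_upwards [eventually_gt_atTop (max 1 (-c))] with x hx
  have hxc : 0 < x + c := by
    have := lt_of_le_of_lt (le_max_right _ _) hx; linarith
  rw [Real.log_div (ne_of_gt hxc) (ne_of_gt hd)]
  ring

/-- Example 1 of the paper: the `ln`-density of the spectrum of the `k`-dimensional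
harmonic oscillator equals `k`.  Here `N(λ)` is the number of tuples `m : Fin k → ℕ`
with `∑ i, ω i · (2 m i + 1) ≤ λ`, and `log N(λ) / log λ → k` as `λ → ∞`. -/
theorem oscillator_density (k : ℕ) (ω : Fin k → ℝ) (hω : ∀ i, 0 < ω i) :
    Tendsto
      (fun lam : ℝ =>
        Real.log (Nat.card {m : Fin k → ℕ // ∑ i, ω i * (2 * (m i : ℝ) + 1) ≤ lam}) /
          Real.log lam)
      atTop (nhds (k : ℝ)) := by
  rcases Nat.eq_zero_or_pos k with hk | hk
  · subst hk
    have heq : (fun lam : ℝ =>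
        Real.log (Nat.card {m : Fin 0 → ℕ // ∑ i, ω i * (2 * (m i : ℝ) + 1) ≤ lam}) /
          Real.log lam) =ᶠ[atTop] (fun _ => (0:ℝ)) := by
      filter_upwards [eventually_ge_atTop (0:ℝ)] with lam hlam
      have hcard : Nat.card {m : Fin 0 → ℕ // ∑ i, ω i * (2 * (m i : ℝ) + 1) ≤ lam} = 1 := by
        haveI : Unique {m : Fin 0 → ℕ // ∑ i, ω i * (2 * (m i : ℝ) + 1) ≤ lam} := by
          refine ⟨⟨⟨fun i => i.elim0, by simpa using hlam⟩⟩, ?_⟩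
          rintro ⟨a, _⟩
          ext i
          exact i.elim0
        exact Nat.card_unique
      rw [hcard]
      norm_num
    simpa using (Tendsto.congr' heq.symm tendsto_const_nhds)
  · haveI : Nonempty (Fin k) := ⟨⟨0, hk⟩⟩
    set w := Finset.univ.inf' Finset.univ_nonempty ω with hw_def
    have hw : 0 < w := by
      rw [hw_def, Finset.lt_inf'_iff]
      exact fun i _ => hω i
    have hwle : ∀ i, w ≤ ω i := fun i => Finset.inf'_le _ (Finset.mem_univ i)
    set S := ∑ i, ω i with hS_def
    have hS : 0 < S := Finset.sum_pos (fun i _ => hω i) Finset.univ_nonempty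
    -- finiteness and upper bound
    have hfin : ∀ lam : ℝ, 0 ≤ lam →
        Finite {m : Fin k → ℕ // ∑ i, ω i * (2 * (m i : ℝ) + 1) ≤ lam} ∧
        (Nat.card {m : Fin k → ℕ // ∑ i, ω i * (2 * (m i : ℝ) + 1) ≤ lam} : ℝ)
          ≤ (lam / (2 * w) + 1) ^ k := by
      intro lam hlam
      set Nb := Nat.floor (lam / (2 * w)) with hNb
      have hbound : ∀ m : {m : Fin k → ℕ // ∑ i, ω i * (2 * (m i : ℝ) + 1) ≤ lam},
          ∀ i, (m : Fin k → ℕ) i < Nb + 1 := by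
        rintro ⟨m, hm⟩ i
        show m i < Nb + 1
        have hterm : ω i * (2 * (m i : ℝ) + 1) ≤ lam := by
          refine le_trans ?_ hm
          refine Finset.single_le_sum (f := fun j => ω j * (2 * (m j : ℝ) + 1))
            (fun j _ => ?_) (Finset.mem_univ i)
          have := hω j; positivity
        have h1 : (m i : ℝ) ≤ lam / (2 * w) := by
          rw [le_div_iff₀ (by positivity)]
          have h2 : w * (2 * (m i : ℝ)) ≤ ω i * (2 * (m i : ℝ)) := by
            apply mul_le_mul_of_nonneg_right (hwle i); positivity
          nlinarith [hω i]
        have := Nat.le_floor h1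
        omega
      set F : {m : Fin k → ℕ // ∑ i, ω i * (2 * (m i : ℝ) + 1) ≤ lam} →
          (Fin k → Fin (Nb + 1)) := fun m i => ⟨(m : Fin k → ℕ) i, hbound m i⟩ with hF
      have hFinj : Function.Injective F := by
        rintro ⟨m, hm⟩ ⟨m', hm'⟩ h
        ext i
        have := congrFun h i
        simpa [hF] using this
      haveI hfinite : Finite {m : Fin k → ℕ // ∑ i, ω i * (2 * (m i : ℝ) + 1) ≤ lam} :=
        Finite.of_injective F hFinj
      refine ⟨hfinite, ?_⟩
      have hcard : Nat.card {m : Fin k → ℕ // ∑ i, ω i * (2 * (m i : ℝ) + 1) ≤ lam}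
          ≤ (Nb + 1) ^ k := by
        have := Nat.card_le_card_of_injective F hFinj
        simpa [Nat.card_eq_fintype_card] using this
      calc (Nat.card {m : Fin k → ℕ // ∑ i, ω i * (2 * (m i : ℝ) + 1) ≤ lam} : ℝ)
          ≤ ((Nb + 1 : ℕ) : ℝ) ^ k := by exact_mod_cast hcard
        _ ≤ (lam / (2 * w) + 1) ^ k := by
            apply pow_le_pow_left₀ (by positivity)
            push_cast
            have := Nat.floor_le (a := lam / (2 * w)) (by positivity)
            linarith
    -- lower bound
    have hlow : ∀ lam : ℝ, S ≤ lam →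
        ((lam / S - 1) / 2) ^ k
          ≤ (Nat.card {m : Fin k → ℕ // ∑ i, ω i * (2 * (m i : ℝ) + 1) ≤ lam} : ℝ) := by
      intro lam hlam
      have hlam0 : 0 ≤ lam := le_trans hS.le hlam
      haveI := (hfin lam hlam0).1
      set x := (lam / S - 1) / 2 with hx_def
      have hx0 : 0 ≤ x := by
        rw [hx_def]
        have : 1 ≤ lam / S := (one_le_div hS).mpr hlam
        linarith
      set n := Nat.floor x with hn
      have hmem : ∀ m : Fin k → Fin (n + 1),
          ∑ i, ω i * (2 * ((m i : ℕ) : ℝ) + 1) ≤ lam := by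
        intro m
        have h1 : ∑ i, ω i * (2 * ((m i : ℕ) : ℝ) + 1)
            ≤ ∑ i, ω i * (2 * (n : ℝ) + 1) := by
          refine Finset.sum_le_sum fun i _ => ?_
          apply mul_le_mul_of_nonneg_left _ (hω i).le
          have : ((m i : ℕ) : ℝ) ≤ (n : ℝ) := by
            exact_mod_cast Nat.lt_succ_iff.mp (m i).isLt
          linarith
        have h2 : ∑ i, ω i * (2 * (n : ℝ) + 1) = (2 * (n : ℝ) + 1) * S := by
          rw [hS_def, Finset.mul_sum]
          exact Finset.sum_congr rfl fun i _ => mul_comm _ _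
        have h3 : (n : ℝ) ≤ x := Nat.floor_le hx0
        have h4 : (2 * (n : ℝ) + 1) * S ≤ lam := by
          have : 2 * (n : ℝ) + 1 ≤ lam / S := by
            rw [hx_def] at h3; linarith
          calc (2 * (n : ℝ) + 1) * S ≤ (lam / S) * S :=
                mul_le_mul_of_nonneg_right this hS.le
            _ = lam := by field_simp
        linarith
      set G : (Fin k → Fin (n + 1)) →
          {m : Fin k → ℕ // ∑ i, ω i * (2 * (m i : ℝ) + 1) ≤ lam} :=
        fun m => ⟨fun i => (m i : ℕ), hmem m⟩ with hG
      have hGinj : Function.Injective G := by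
        intro a b h
        funext i
        have := congrFun (congrArg Subtype.val h) i
        exact Fin.ext this
      have hcard : (n + 1) ^ k
          ≤ Nat.card {m : Fin k → ℕ // ∑ i, ω i * (2 * (m i : ℝ) + 1) ≤ lam} := by
        have := Nat.card_le_card_of_injective G hGinj
        simpa [Nat.card_eq_fintype_card] using this
      have hxn : x ≤ ((n + 1 : ℕ) : ℝ) := by
        push_cast
        exact (Nat.lt_floor_add_one x).le
      calc x ^ k ≤ ((n + 1 : ℕ) : ℝ) ^ k := pow_le_pow_left₀ hx0 hxn k
        _ ≤ _ := by exact_mod_cast hcard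
    -- squeeze
    have hL : Tendsto (fun lam : ℝ =>
        (k : ℝ) * Real.log ((lam + (-S)) / (2 * S)) / Real.log lam) atTop (nhds k) :=
      osc_aux2 k (-S) (2 * S) (by positivity)
    have hU : Tendsto (fun lam : ℝ =>
        (k : ℝ) * Real.log ((lam + 2 * w) / (2 * w)) / Real.log lam) atTop (nhds k) :=
      osc_aux2 k (2 * w) (2 * w) (by positivity)
    refine tendsto_of_tendsto_of_tendsto_of_le_of_le' hL hU ?_ ?_
    · filter_upwards [eventually_ge_atTop (2 * S), eventually_gt_atTop 1,
        eventually_ge_atTop 0] with lam hlam2S hlam1 hlam0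
      have hlamS : S ≤ lam := by linarith
      have hcard := hlow lam hlamS
      have hx : (0:ℝ) < (lam / S - 1) / 2 := by
        have : 2 ≤ lam / S := (le_div_iff₀ hS).mpr (by linarith)
        linarith
      have hxeq : (lam / S - 1) / 2 = (lam + (-S)) / (2 * S) := by field_simp; ring
      have hlogpos : 0 < Real.log lam := Real.log_pos hlam1
      have hxk : (0:ℝ) < ((lam / S - 1) / 2) ^ k := pow_pos hx k
      have hlog1 : Real.log (((lam / S - 1) / 2) ^ k) ≤
          Real.log (Nat.card {m : Fin k → ℕ // ∑ i, ω i * (2 * (m i : ℝ) + 1) ≤ lam}) :=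
        Real.log_le_log hxk hcard
      rw [Real.log_pow] at hlog1
      rw [← hxeq]
      exact div_le_div_of_nonneg_right hlog1 hlogpos.le
    · filter_upwards [eventually_ge_atTop (2 * S), eventually_gt_atTop 1,
        eventually_ge_atTop 0] with lam hlam2S hlam1 hlam0
      have hlamS : S ≤ lam := by linarith
      have hcardU := (hfin lam hlam0).2
      have hcardL := hlow lam hlamS
      have hx : (0:ℝ) < (lam / S - 1) / 2 := by
        have : 2 ≤ lam / S := (le_div_iff₀ hS).mpr (by linarith)
        linarith
      have hNpos : (0:ℝ) <
          (Nat.card {m : Fin k → ℕ // ∑ i, ω i * (2 * (m i : ℝ) + 1) ≤ lam} : ℝ) :=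
        lt_of_lt_of_le (pow_pos hx k) hcardL
      have hlogpos : 0 < Real.log lam := Real.log_pos hlam1
      have hlog1 : Real.log (Nat.card {m : Fin k → ℕ // ∑ i, ω i * (2 * (m i : ℝ) + 1) ≤ lam})
          ≤ Real.log ((lam / (2 * w) + 1) ^ k) := Real.log_le_log hNpos hcardU
      rw [Real.log_pow] at hlog1
      have hxeq : lam / (2 * w) + 1 = (lam + 2 * w) / (2 * w) := by field_simp
      rw [← hxeq]
      exact div_le_div_of_nonneg_right hlog1 hlogpos.le
end
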